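/- Let N ≥ 5 and k ≥ 1 be integers and let H₁, A, B be strictly positive real numbers. Then the function Ψ : (0,∞)^k → ℝ defined by Ψ(ν) = H₁ ν₁² + A ν_k^{-2(N-2)/(N-4)} + B Σ_{j=1}^{k-1} ν_{j+1}/ν_j attains its global minimum at some point ν̂ ∈ (0,∞)^k, i.e. there exists ν̂ ∈ (0,∞)^k with Ψ(ν̂) ≤ Ψ(ν) for all ν ∈ (0,∞)^k. -/

import Mathlib

/-- `Ψ(ν) = H₁ ν₁² + A ν_k^{-2(N-2)/(N-4)} + B Σ_{j=1}^{k-1} ν_{j+1}/ν_j`. -/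
noncomputable def Psi (N k : ℕ) (hk : 0 < k) (H₁ A B : ℝ) (ν : Fin k → ℝ) : ℝ :=
  H₁ * ν ⟨0, hk⟩ ^ 2
    + A * ν ⟨k - 1, Nat.sub_lt hk Nat.one_pos⟩ ^ (-(2 * ((N : ℝ) - 2)) / ((N : ℝ) - 4))
    + B * ∑ j : Fin (k - 1),
        ν ⟨j.1 + 1, by have := j.2; omega⟩ / ν ⟨j.1, by have := j.2; omega⟩


/-- Auxiliary: the `j`-th ratio term in `Psi`. -/
noncomputable def PsiTerm (k : ℕ) (ν : Fin k → ℝ) (j : Fin (k - 1)) : ℝ :=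
  ν ⟨j.1 + 1, by have := j.2; omega⟩ / ν ⟨j.1, by have := j.2; omega⟩

theorem Psi_eq (N k : ℕ) (hk : 0 < k) (H₁ A B : ℝ) (ν : Fin k → ℝ) :
    Psi N k hk H₁ A B ν = H₁ * ν ⟨0, hk⟩ ^ 2
      + A * ν ⟨k - 1, Nat.sub_lt hk Nat.one_pos⟩ ^ (-(2 * ((N : ℝ) - 2)) / ((N : ℝ) - 4))
      + B * ∑ j : Fin (k - 1), PsiTerm k ν j := rfl

set_option maxHeartbeats 1000000 in
/-- For `H₁, A, B > 0` the function `Ψ` attains its global minimum on `(0,∞)^k`. -/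
theorem statement13 (N k : ℕ) (hN : 5 ≤ N) (hk : 0 < k) (H₁ A B : ℝ)
    (hH₁ : 0 < H₁) (hA : 0 < A) (hB : 0 < B) :
    ∃ νhat : Fin k → ℝ, (∀ i, 0 < νhat i) ∧
      ∀ ν : Fin k → ℝ, (∀ i, 0 < ν i) →
        Psi N k hk H₁ A B νhat ≤ Psi N k hk H₁ A B ν := by
  classical
  have hNr : (5 : ℝ) ≤ (N : ℝ) := by exact_mod_cast hN
  set e' : ℝ := -(2 * ((N : ℝ) - 2)) / ((N : ℝ) - 4) with he'
  have hden : (0 : ℝ) < (N : ℝ) - 4 := by linarith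
  set β : ℝ := (2 * ((N : ℝ) - 2)) / ((N : ℝ) - 4) with hβdef
  have hβ : 0 < β := div_pos (by linarith) hden
  have he'β : e' = -β := by rw [he', hβdef, neg_div]
  set i0 : Fin k := ⟨0, hk⟩ with hi0
  set tp : Fin k := ⟨k - 1, Nat.sub_lt hk Nat.one_pos⟩ with htp
  set f : (Fin k → ℝ) → ℝ := Psi N k hk H₁ A B with hf
  set S : Set (Fin k → ℝ) := {ν | ∀ i, 0 < ν i} with hS
  have hfdef : ∀ ν : Fin k → ℝ, f ν = H₁ * ν i0 ^ 2 + A * ν tp ^ e'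
      + B * ∑ j : Fin (k - 1), PsiTerm k ν j :=
    fun ν => Psi_eq N k hk H₁ A B ν
  -- continuity on S
  have hcontS : ∀ ν ∈ S, ContinuousAt f ν := by
    intro ν hν
    have h1 : ContinuousAt (fun ν : Fin k → ℝ => H₁ * ν i0 ^ 2) ν :=
      (continuousAt_const.mul (((continuous_apply i0).continuousAt).pow 2))
    have h2 : ContinuousAt (fun ν : Fin k → ℝ => A * ν tp ^ e') ν := by
      have h2b : ContinuousAt (fun p : Fin k → ℝ => p tp) ν :=
        (continuous_apply tp).continuousAt
      exact continuousAt_const.mul (h2b.rpow_const (Or.inl (hν tp).ne'))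
    have h3 : ContinuousAt (fun ν : Fin k → ℝ =>
        B * ∑ j : Fin (k - 1), PsiTerm k ν j) ν := by
      refine continuousAt_const.mul ?_
      refine tendsto_finset_sum _ fun j _ => ?_
      show ContinuousAt (fun ν : Fin k → ℝ => PsiTerm k ν j) ν
      exact ((continuous_apply _).continuousAt).div
        ((continuous_apply _).continuousAt) (hν _).ne' 
    have := (h1.add h2).add h3
    convert this using 1
    exact funext fun x => hfdef x
  -- reference point
  set one : Fin k → ℝ := fun _ => 1 with hone
  have honeS : one ∈ S := fun i => one_pos
  set c : ℝ := f one with hcdef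
  have hc : 0 < c := by
    rw [hcdef, hfdef]
    have : (0:ℝ) ≤ ∑ j : Fin (k-1), PsiTerm k one j :=
      Finset.sum_nonneg fun j _ => by norm_num [hone, PsiTerm]
    have h2 : (0:ℝ) < A * one tp ^ e' := by
      simp only [hone, Real.one_rpow]; linarith
    nlinarith [sq_nonneg (one i0), mul_nonneg hB.le this]
  -- bounds
  set a : ℝ := Real.sqrt (c / H₁) with ha
  set r : ℝ := max (c / B) 1 with hr
  have hr1 : (1:ℝ) ≤ r := le_max_right _ _
  have hr0 : (0:ℝ) < r := lt_of_lt_of_le one_pos hr1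
  set M : ℕ → ℝ := fun i => a * r ^ i with hM
  set e : ℝ := (A / c) ^ β⁻¹ with he
  have he0 : 0 < e := Real.rpow_pos_of_pos (div_pos hA hc) _
  set s : ℝ := min (B / c) 1 with hs
  have hs0 : 0 < s := lt_min (div_pos hB hc) one_pos
  have hs1 : s ≤ 1 := min_le_right _ _
  set d : ℕ → ℝ := fun i => e * s ^ (k - 1 - i) with hd
  have hd0 : ∀ i, 0 < d i := fun i => mul_pos he0 (pow_pos hs0 _)
  -- key sublevel bound
  have key : ∀ ν ∈ S, f ν ≤ c → ∀ i : Fin k, ν i ∈ Set.Icc (d i.1) (M i.1) := by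
    intro ν hν hle
    rw [hfdef] at hle
    have htermpos : ∀ j : Fin (k-1), 0 < PsiTerm k ν j :=
      fun j => div_pos (hν _) (hν _)
    have hsum_nonneg : (0:ℝ) ≤ ∑ j : Fin (k-1), PsiTerm k ν j :=
      Finset.sum_nonneg fun j _ => (htermpos j).le
    have hT3 : (0:ℝ) ≤ B * ∑ j : Fin (k-1), PsiTerm k ν j :=
      mul_nonneg hB.le hsum_nonneg
    have hT2pos : 0 < A * ν tp ^ e' := mul_pos hA (Real.rpow_pos_of_pos (hν tp) _)
    have hT1nn : (0:ℝ) ≤ H₁ * ν i0 ^ 2 := mul_nonneg hH₁.le (sq_nonneg _)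
    have hT1 : H₁ * ν i0 ^ 2 ≤ c := by linarith
    have hT2 : A * ν tp ^ e' ≤ c := by linarith
    -- each ratio term is ≤ c/B
    have hterm : ∀ j : Fin (k-1), PsiTerm k ν j ≤ c / B := by
      intro j
      have h1 : PsiTerm k ν j ≤ ∑ j : Fin (k-1), PsiTerm k ν j :=
        Finset.single_le_sum (fun j _ => (htermpos j).le) (Finset.mem_univ j)
      have h2 : B * PsiTerm k ν j ≤ c := by nlinarith
      exact (le_div_iff₀' hB).mpr h2
    -- upward step
    have hstep_up : ∀ (i : ℕ) (h : i + 1 < k) (h' : i < k),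
        ν ⟨i + 1, h⟩ ≤ (c / B) * ν ⟨i, h'⟩ := by
      intro i h h'
      have hj' : ν ⟨i + 1, h⟩ / ν ⟨i, h'⟩ ≤ c / B := hterm ⟨i, by omega⟩
      exact (div_le_iff₀ (hν ⟨i, h'⟩)).mp hj' 
    -- downward step
    have hstep_down : ∀ (i : ℕ) (h : i + 1 < k) (h' : i < k),
        (B / c) * ν ⟨i + 1, h⟩ ≤ ν ⟨i, h'⟩ := by
      intro i h h'
      have h2 := hstep_up i h h'
      have h3 := mul_le_mul_of_nonneg_left h2 (div_pos hB hc).le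
      have hBc : B / c * (c / B) = 1 := by field_simp
      calc (B / c) * ν ⟨i + 1, h⟩ ≤ B / c * (c / B * ν ⟨i, h'⟩) := h3
        _ = ν ⟨i, h'⟩ := by rw [← mul_assoc, hBc, one_mul]
    -- upper bounds
    have hub : ∀ (i : ℕ) (h : i < k), ν ⟨i, h⟩ ≤ M i := by
      intro i
      induction i with
      | zero =>
        intro h
        have h1 : ν i0 ^ 2 ≤ c / H₁ := (le_div_iff₀' hH₁).mpr hT1
        have h2 : ν i0 ≤ a := by
          rw [ha]
          exact (Real.le_sqrt (hν i0).le (div_pos hc hH₁).le).mpr h1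
        simpa [hM, hi0] using h2
      | succ i ih =>
        intro h
        have hi : i < k := by omega
        have h1 := hstep_up i h hi
        have h2 := ih hi
        have ha0 : 0 ≤ a := Real.sqrt_nonneg _
        have hMnn : 0 ≤ M i := mul_nonneg ha0 (pow_pos hr0 i).le
        have h3 : (c / B) * ν ⟨i, hi⟩ ≤ r * M i := by
          have hcB : c / B ≤ r := le_max_left _ _
          have := mul_le_mul hcB h2 (hν ⟨i, hi⟩).le hr0.le
          exact this
        have : ν ⟨i + 1, h⟩ ≤ r * M i := le_trans h1 h3
        calc ν ⟨i + 1, h⟩ ≤ r * M i := this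
          _ = M (i + 1) := by rw [hM]; ring
    -- lower bound at the top index
    have htplb : e ≤ ν tp := by
      set x : ℝ := ν tp with hx
      have hx0 : 0 < x := hν tp
      have hxe : x ^ e' = (x ^ β)⁻¹ := by rw [he'β, Real.rpow_neg hx0.le]
      rw [hxe] at hT2
      have hxb : 0 < x ^ β := Real.rpow_pos_of_pos hx0 β
      have h1 : A ≤ c * x ^ β := by
        have h := mul_le_mul_of_nonneg_right hT2 hxb.le
        rwa [mul_assoc, inv_mul_cancel₀ hxb.ne', mul_one] at h
      have h2 : A / c ≤ x ^ β := (div_le_iff₀ hc).mpr (by linarith)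
      have h3 := Real.rpow_le_rpow (div_pos hA hc).le h2 (inv_nonneg.mpr hβ.le)
      rwa [← Real.rpow_mul hx0.le, mul_inv_cancel₀ hβ.ne', Real.rpow_one] at h3
    -- downward induction
    have hlbm : ∀ m : ℕ, m ≤ k - 1 → d (k - 1 - m) ≤ ν ⟨k - 1 - m, by omega⟩ := by
      intro m
      induction m with
      | zero =>
        intro _
        have : d (k - 1 - 0) = e := by
          simp [hd]
        rw [this]
        have : (⟨k - 1 - 0, by omega⟩ : Fin k) = tp := by
          simp [htp]
        rw [this]
        exact htplb
      | succ m ih =>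
        intro hm
        have hm' : m ≤ k - 1 := by omega
        have ih' := ih hm'
        have hlt : (k - 1 - (m + 1)) + 1 < k := by omega
        have heq : (k - 1 - (m + 1)) + 1 = k - 1 - m := by omega
        have hstep := hstep_down (k - 1 - (m + 1)) hlt (by omega)
        have hν1 : (⟨(k - 1 - (m + 1)) + 1, hlt⟩ : Fin k) = ⟨k - 1 - m, by omega⟩ := by
          simp [heq]
        rw [hν1] at hstep
        have h4 : (B / c) * d (k - 1 - m) ≤ (B / c) * ν ⟨k - 1 - m, by omega⟩ :=
          mul_le_mul_of_nonneg_left ih' (div_pos hB hc).le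
        have h5 : d (k - 1 - (m + 1)) ≤ (B / c) * d (k - 1 - m) := by
          have h6 : k - 1 - (k - 1 - m) = m := by omega
          have h7 : k - 1 - (k - 1 - (m + 1)) = m + 1 := by omega
          rw [hd]
          simp only [h6, h7]
          have hsBc : s ≤ B / c := min_le_left _ _
          have heq2 : e * s ^ (m + 1) = s * (e * s ^ m) := by ring
          rw [heq2]
          have hesm : 0 ≤ e * s ^ m := (mul_pos he0 (pow_pos hs0 m)).le
          exact mul_le_mul_of_nonneg_right hsBc hesm
        exact le_trans h5 (le_trans h4 hstep)
    have hlb : ∀ (i : ℕ) (h : i < k), d i ≤ ν ⟨i, h⟩ := by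
      intro i h
      have hm := hlbm (k - 1 - i) (by omega)
      have hv : k - 1 - (k - 1 - i) = i := by omega
      refine le_trans (le_of_eq ?_) (le_trans hm (le_of_eq ?_))
      · rw [hv]
      · exact congrArg ν (Fin.ext hv)
    intro i
    constructor
    · have := hlb i.1 i.2
      simpa using this
    · have := hub i.1 i.2
      simpa using this
  -- the compact box
  set K : Set (Fin k → ℝ) := Set.pi Set.univ fun i : Fin k => Set.Icc (d i.1) (M i.1)
    with hK
  have hKc : IsCompact K := isCompact_univ_pi fun i => isCompact_Icc
  have hKS : K ⊆ S := by
    intro ν hν i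
    exact lt_of_lt_of_le (hd0 i.1) (hν i (Set.mem_univ i)).1
  have honeK : one ∈ K := by
    intro i _
    exact key one honeS le_rfl i
  have hcont : ContinuousOn f K := fun ν hν => (hcontS ν (hKS hν)).continuousWithinAt
  obtain ⟨νhat, hmem, hmin⟩ := hKc.exists_isMinOn ⟨one, honeK⟩ hcont
  refine ⟨νhat, hKS hmem, fun ν hν => ?_⟩
  by_cases h : f ν ≤ c
  · exact isMinOn_iff.mp hmin ν (fun i _ => key ν hν h i)
  · exact le_trans (isMinOn_iff.mp hmin one honeK) (le_of_not_ge h)
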